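/- Let P, N ⊆ [n] be disjoint and nonempty, let U = P × N, and define the coverage function f(S) = |⋃_{i∈S} h(i)| / |U| where h(i) = {i} × N for i ∈ P, h(i) = P × {i} for i ∈ N, and h(i) = ∅ otherwise. Define prices p_i = f({i}) - 1/(2|N||U|) for i ∈ N, p_i = f({i}) - 1/(2|P||U|) for i ∈ P, and p_i = 2 otherwise. Then D_f(p) = {N, P}. -/

import Mathlib

set_option maxHeartbeats 2000000 in
/-- For the coverage-function construction, the demand set at the given prices is {N, P}. -/
theorem stmt13 (n : ℕ) (P N : Finset (Fin n)) (hdisj : Disjoint P N)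
    (hP : P.Nonempty) (hN : N.Nonempty)
    (h : Fin n → Finset (Fin n × Fin n))
    (hh : ∀ i, h i = if i ∈ P then ({i} : Finset (Fin n)) ×ˢ N
      else if i ∈ N then P ×ˢ ({i} : Finset (Fin n)) else ∅)
    (f : Finset (Fin n) → ℝ)
    (hf : ∀ S, f S = ((S.biUnion h).card : ℝ) / ((P ×ˢ N).card : ℝ))
    (p : Fin n → ℝ)
    (hp : ∀ i, p i = if i ∈ N then f {i} - 1 / (2 * (N.card : ℝ) * ((P ×ˢ N).card : ℝ))
      else if i ∈ P then f {i} - 1 / (2 * (P.card : ℝ) * ((P ×ˢ N).card : ℝ)) else 2) :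
    ∀ S, (∀ T, f T - ∑ i ∈ T, p i ≤ f S - ∑ i ∈ S, p i) ↔ (S = N ∨ S = P) := by
  classical
  have hdl := Finset.disjoint_left.mp hdisj
  have hm1 : 1 ≤ P.card := hP.card_pos
  have hk1 : 1 ≤ N.card := hN.card_pos
  have hc : (P ×ˢ N).card = P.card * N.card := Finset.card_product P N
  set M : ℝ := (P.card : ℝ) with hM
  set K : ℝ := (N.card : ℝ) with hK
  have hM1 : (1:ℝ) ≤ M := by rw [hM]; exact_mod_cast hm1
  have hK1 : (1:ℝ) ≤ K := by rw [hK]; exact_mod_cast hk1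
  have hM0 : (0:ℝ) < M := lt_of_lt_of_le one_pos hM1
  have hK0 : (0:ℝ) < K := lt_of_lt_of_le one_pos hK1
  -- coverage set identity
  have hbi : ∀ S : Finset (Fin n), S.biUnion h = ((S ∩ P) ×ˢ N) ∪ (P ×ˢ (S ∩ N)) := by
    intro S
    ext ⟨u, v⟩
    simp only [Finset.mem_biUnion, Finset.mem_union, Finset.mem_product, Finset.mem_inter]
    constructor
    · rintro ⟨i, hi, hx⟩
      rw [hh] at hx
      by_cases hiP : i ∈ P
      · simp only [hiP, if_true, Finset.mem_product, Finset.mem_singleton] at hx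
        exact Or.inl ⟨⟨hx.1 ▸ hi, hx.1 ▸ hiP⟩, hx.2⟩
      · by_cases hiN : i ∈ N
        · simp only [hiP, hiN, if_false, if_true, Finset.mem_product,
            Finset.mem_singleton] at hx
          exact Or.inr ⟨hx.1, ⟨hx.2 ▸ hi, hx.2 ▸ hiN⟩⟩
        · simp [hiP, hiN] at hx
    · rintro (⟨⟨hu, huP⟩, hv⟩ | ⟨hu, hvS, hvN⟩)
      · exact ⟨u, hu, by rw [hh]; simp [huP, hv]⟩
      · have hvP : v ∉ P := fun h' => hdl h' hvN
        exact ⟨v, hvS, by rw [hh]; simp [hvP, hvN, hu]⟩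
  -- coverage cardinality
  have hcard : ∀ S : Finset (Fin n), ((S.biUnion h).card : ℝ)
      = ((S ∩ P).card : ℝ) * K + ((S ∩ N).card : ℝ) * M
        - ((S ∩ P).card : ℝ) * ((S ∩ N).card : ℝ) := by
    intro S
    rw [hbi]
    have hint : (((S ∩ P) ×ˢ N) ∩ (P ×ˢ (S ∩ N))) = (S ∩ P) ×ˢ (S ∩ N) := by
      ext ⟨u, v⟩
      simp only [Finset.mem_inter, Finset.mem_product]
      tauto
    have := Finset.card_union_add_card_inter ((S ∩ P) ×ˢ N) (P ×ˢ (S ∩ N))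
    rw [hint, Finset.card_product, Finset.card_product, Finset.card_product] at this
    have h2 : ((((S ∩ P) ×ˢ N) ∪ (P ×ˢ (S ∩ N))).card : ℝ)
        + ((S ∩ P).card : ℝ) * ((S ∩ N).card : ℝ)
        = ((S ∩ P).card : ℝ) * K + M * ((S ∩ N).card : ℝ) := by
      rw [hM, hK]; exact_mod_cast congrArg (Nat.cast : ℕ → ℝ) this
    linarith
  -- sum of prices
  have hsum : ∀ S : Finset (Fin n), ∑ i ∈ S, p i
      = ((S ∩ P).card : ℝ) * (K / (M * K) - 1 / (2 * M * (M * K)))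
        + ((S ∩ N).card : ℝ) * (M / (M * K) - 1 / (2 * K * (M * K)))
        + 2 * ((S \ (P ∪ N)).card : ℝ) := by
    intro S
    have hfP : ∀ i ∈ P, f {i} = K / (M * K) := by
      intro i hi
      rw [hf, hbi]
      have h1 : ({i} : Finset (Fin n)) ∩ P = {i} := by
        simp [Finset.inter_eq_left, hi]
      have h2 : ({i} : Finset (Fin n)) ∩ N = ∅ :=
        Finset.singleton_inter_of_notMem (hdl hi)
      rw [h1, h2]
      rw [hM, hK]
      simp only [Finset.product_empty, Finset.union_empty, Finset.card_product,
        Finset.card_singleton, one_mul, hc]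
      push_cast
      ring
    have hfN : ∀ i ∈ N, f {i} = M / (M * K) := by
      intro i hi
      rw [hf, hbi]
      have h1 : ({i} : Finset (Fin n)) ∩ N = {i} := by
        simp [Finset.inter_eq_left, hi]
      have h2 : ({i} : Finset (Fin n)) ∩ P = ∅ :=
        Finset.singleton_inter_of_notMem (fun h' => hdl h' hi)
      rw [h1, h2]
      rw [hM, hK]
      simp only [Finset.empty_product, Finset.empty_union, Finset.card_product,
        Finset.card_singleton, mul_one, hc]
      push_cast
      ring
    have hdecomp : S = (S ∩ P) ∪ (S ∩ N) ∪ (S \ (P ∪ N)) := by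
      ext x
      simp only [Finset.mem_union, Finset.mem_inter, Finset.mem_sdiff]
      tauto
    have hd1 : Disjoint (S ∩ P) (S ∩ N) := by
      apply Finset.disjoint_left.mpr
      intro x hx hx'
      exact hdl (Finset.mem_inter.mp hx).2 (Finset.mem_inter.mp hx').2
    have hd2 : Disjoint ((S ∩ P) ∪ (S ∩ N)) (S \ (P ∪ N)) := by
      apply Finset.disjoint_left.mpr
      intro x hx hx'
      rcases Finset.mem_union.mp hx with h1 | h1 <;>
        simp only [Finset.mem_sdiff, Finset.mem_union] at hx' <;>
        exact hx'.2 (by simp [Finset.mem_inter.mp h1 |>.2])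
    conv_lhs => rw [hdecomp]
    rw [Finset.sum_union hd2, Finset.sum_union hd1]
    have e1 : ∑ i ∈ S ∩ P, p i = ((S ∩ P).card : ℝ) * (K / (M * K) - 1 / (2 * M * (M * K))) := by
      have hcst : ∀ i ∈ S ∩ P, p i = K / (M * K) - 1 / (2 * M * (M * K)) := by
        intro i hi
        have hiP := (Finset.mem_inter.mp hi).2
        have hiN : i ∉ N := fun h' => hdl hiP h'
        rw [hp, if_neg hiN, if_pos hiP, hfP i hiP, hc]
        rw [hM, hK]
        push_cast
        ring
      rw [Finset.sum_congr rfl hcst, Finset.sum_const, nsmul_eq_mul]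
    have e2 : ∑ i ∈ S ∩ N, p i = ((S ∩ N).card : ℝ) * (M / (M * K) - 1 / (2 * K * (M * K))) := by
      have hcst : ∀ i ∈ S ∩ N, p i = M / (M * K) - 1 / (2 * K * (M * K)) := by
        intro i hi
        have hiN := (Finset.mem_inter.mp hi).2
        rw [hp, if_pos hiN, hfN i hiN, hc]
        rw [hM, hK]
        push_cast
        ring
      rw [Finset.sum_congr rfl hcst, Finset.sum_const, nsmul_eq_mul]
    have e3 : ∑ i ∈ S \ (P ∪ N), p i = 2 * ((S \ (P ∪ N)).card : ℝ) := by
      have hcst : ∀ i ∈ S \ (P ∪ N), p i = 2 := by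
        intro i hi
        simp only [Finset.mem_sdiff, Finset.mem_union] at hi
        rw [hp, if_neg (fun h' => hi.2 (Or.inr h')), if_neg (fun h' => hi.2 (Or.inl h'))]
      rw [Finset.sum_congr rfl hcst, Finset.sum_const, nsmul_eq_mul, mul_comm]
    rw [e1, e2, e3]
  -- key polynomial identity
  have hkey : ∀ S : Finset (Fin n), (f S - ∑ i ∈ S, p i) * (2 * M * K * (M * K))
      = ((S ∩ P).card : ℝ) * K + ((S ∩ N).card : ℝ) * M
        - 2 * ((S ∩ P).card : ℝ) * ((S ∩ N).card : ℝ) * (M * K)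
        - 4 * ((S \ (P ∪ N)).card : ℝ) * (M * K) * (M * K) := by
    intro S
    rw [hf, hsum, hcard, hc]
    push_cast
    field_simp
    ring
  have hMK0 : (0:ℝ) < M * K := mul_pos hM0 hK0
  have hD0 : (0:ℝ) < 2 * M * K * (M * K) := by positivity
  -- value at N and P
  have hval : ∀ S : Finset (Fin n), S = N ∨ S = P →
      f S - ∑ i ∈ S, p i = 1 / (2 * (M * K)) := by
    intro S hS
    have h1 : (f S - ∑ i ∈ S, p i) * (2 * M * K * (M * K)) = M * K := by
      rw [hkey]
      rcases hS with rfl | rfl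
      · have h1 : S ∩ P = ∅ := by
          apply Finset.eq_empty_of_forall_notMem
          intro x hx
          exact hdl (Finset.mem_inter.mp hx).2 (Finset.mem_inter.mp hx).1
        have h2 : S ∩ S = S := Finset.inter_self S
        have h3 : S \ (P ∪ S) = ∅ := by
          simp [Finset.sdiff_eq_empty_iff_subset]
        rw [h1, h2, h3]
        simp only [Finset.card_empty, Nat.cast_zero, zero_mul, mul_zero, sub_zero, zero_add]
        rw [hK]
        ring
      · have h1 : S ∩ S = S := Finset.inter_self S
        have h2 : S ∩ N = ∅ := by
          apply Finset.eq_empty_of_forall_notMem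
          intro x hx
          exact hdl (Finset.mem_inter.mp hx).1 (Finset.mem_inter.mp hx).2
        have h3 : S \ (S ∪ N) = ∅ := by
          simp [Finset.sdiff_eq_empty_iff_subset]
        rw [h1, h2, h3]
        simp only [Finset.card_empty, Nat.cast_zero, zero_mul, mul_zero, sub_zero, zero_add,
          add_zero]
        rw [hM]
    have h2 : f S - ∑ i ∈ S, p i = (M * K) / (2 * M * K * (M * K)) := by
      rw [eq_div_iff (ne_of_gt hD0)]
      exact h1
    rw [h2, div_eq_div_iff (ne_of_gt hD0) (by positivity : (2 * (M * K)) ≠ 0)]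
    ring
  -- strict bound for non-optimal sets
  have hub : ∀ S : Finset (Fin n), S ≠ N → S ≠ P →
      f S - ∑ i ∈ S, p i < 1 / (2 * (M * K)) := by
    intro S hSN hSP
    have key : (f S - ∑ i ∈ S, p i) * (2 * M * K * (M * K)) < M * K := by
      rw [hkey]
      set a := (S ∩ P).card with haa
      set b := (S ∩ N).card with hbb
      set e := (S \ (P ∪ N)).card with hee
      have ha : a ≤ P.card := Finset.card_le_card Finset.inter_subset_right
      have hb : b ≤ N.card := Finset.card_le_card Finset.inter_subset_right
      have haR : (a:ℝ) ≤ M := by rw [hM]; exact_mod_cast ha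
      have hbR : (b:ℝ) ≤ K := by rw [hK]; exact_mod_cast hb
      have hMK1 : (1:ℝ) ≤ M * K := le_trans hM1 (le_mul_of_one_le_right (le_of_lt hM0) hK1)
      have ha0 : (0:ℝ) ≤ (a:ℝ) := Nat.cast_nonneg a
      have hb0 : (0:ℝ) ≤ (b:ℝ) := Nat.cast_nonneg b
      have hnotP : ¬ (e = 0 ∧ b = 0 ∧ a = P.card) := by
        rintro ⟨he0, hb0', ha0'⟩
        apply hSP
        have hsub : S ⊆ P ∪ N := by
          rw [← Finset.sdiff_eq_empty_iff_subset]
          exact Finset.card_eq_zero.mp he0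
        have hSN0 : S ∩ N = ∅ := Finset.card_eq_zero.mp hb0'
        have hSP' : S ∩ P = P :=
          Finset.eq_of_subset_of_card_le Finset.inter_subset_right (le_of_eq ha0'.symm)
        apply Finset.Subset.antisymm
        · intro x hx
          rcases Finset.mem_union.mp (hsub hx) with h1 | h1
          · exact h1
          · exact absurd (Finset.mem_inter.mpr ⟨hx, h1⟩) (by simp [hSN0])
        · intro x hx
          exact (Finset.mem_inter.mp (hSP' ▸ hx)).1
      have hnotN : ¬ (e = 0 ∧ a = 0 ∧ b = N.card) := by
        rintro ⟨he0, ha0', hb0'⟩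
        apply hSN
        have hsub : S ⊆ P ∪ N := by
          rw [← Finset.sdiff_eq_empty_iff_subset]
          exact Finset.card_eq_zero.mp he0
        have hSP0 : S ∩ P = ∅ := Finset.card_eq_zero.mp ha0'
        have hSN' : S ∩ N = N :=
          Finset.eq_of_subset_of_card_le Finset.inter_subset_right (le_of_eq hb0'.symm)
        apply Finset.Subset.antisymm
        · intro x hx
          rcases Finset.mem_union.mp (hsub hx) with h1 | h1
          · exact absurd (Finset.mem_inter.mpr ⟨hx, h1⟩) (by simp [hSP0])
          · exact h1
        · intro x hx
          exact (Finset.mem_inter.mp (hSN' ▸ hx)).1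
      rcases Nat.eq_zero_or_pos e with he0 | he1
      · rcases Nat.eq_zero_or_pos b with hbz | hb1
        · have ham : a < P.card := lt_of_le_of_ne ha (fun hc' => hnotP ⟨he0, hbz, hc'⟩)
          have haR' : (a:ℝ) < M := by rw [hM]; exact_mod_cast ham
          rw [he0, hbz]
          push_cast
          linarith [mul_lt_mul_of_pos_right haR' hK0]
        · rcases Nat.eq_zero_or_pos a with haz | ha1
          · have hbm : b < N.card := lt_of_le_of_ne hb (fun hc' => hnotN ⟨he0, haz, hc'⟩)
            have hbR' : (b:ℝ) < K := by rw [hK]; exact_mod_cast hbm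
            rw [he0, haz]
            push_cast
            linarith [mul_lt_mul_of_pos_right hbR' hM0]
          · have ha1R : (1:ℝ) ≤ (a:ℝ) := by exact_mod_cast ha1
            have hb1R : (1:ℝ) ≤ (b:ℝ) := by exact_mod_cast hb1
            have t1 : (a:ℝ) * K ≤ M * K := mul_le_mul_of_nonneg_right haR (le_of_lt hK0)
            have t2 : (b:ℝ) * M ≤ K * M := mul_le_mul_of_nonneg_right hbR (le_of_lt hM0)
            have t3 : (1:ℝ) ≤ (a:ℝ) * (b:ℝ) :=
              le_trans ha1R (le_mul_of_one_le_right ha0 hb1R)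
            have t4 : M * K ≤ (a:ℝ) * (b:ℝ) * (M * K) :=
              le_mul_of_one_le_left (le_of_lt hMK0) t3
            rw [he0]
            push_cast
            linarith
      · have he1R : (1:ℝ) ≤ (e:ℝ) := by exact_mod_cast he1
        have t1 : (a:ℝ) * K ≤ M * K := mul_le_mul_of_nonneg_right haR (le_of_lt hK0)
        have t2 : (b:ℝ) * M ≤ K * M := mul_le_mul_of_nonneg_right hbR (le_of_lt hM0)
        have t7 : (0:ℝ) ≤ (a:ℝ) * (b:ℝ) * (M * K) :=
          mul_nonneg (mul_nonneg ha0 hb0) (le_of_lt hMK0)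
        have t5 : M * K ≤ (M * K) * (M * K) := le_mul_of_one_le_left (le_of_lt hMK0) hMK1
        have t6 : (M * K) * (M * K) ≤ (e:ℝ) * ((M * K) * (M * K)) :=
          le_mul_of_one_le_left (le_of_lt (mul_pos hMK0 hMK0)) he1R
        linarith
    have h2 : f S - ∑ i ∈ S, p i < (M * K) / (2 * M * K * (M * K)) :=
      (lt_div_iff₀ hD0).mpr key
    have h3 : (M * K) / (2 * M * K * (M * K)) = 1 / (2 * (M * K)) := by
      rw [div_eq_div_iff (ne_of_gt hD0) (by positivity : (2 * (M * K)) ≠ 0)]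
      ring
    linarith [h3 ▸ h2]
  -- conclude
  intro S
  constructor
  · intro hmax
    by_contra hcon
    push_neg at hcon
    have h1 := hub S hcon.1 hcon.2
    have h2 := hmax N
    rw [hval N (Or.inl rfl)] at h2
    linarith
  · intro hS
    intro T
    rw [hval S hS]
    by_cases hT : T = N ∨ T = P
    · rw [hval T hT]
    · push_neg at hT
      exact le_of_lt (hub T hT.1 hT.2)
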